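/- For every j ≥ 1, there exists an integer p with 1 ≤ p < 3^j, gcd(p, 3^j) = 1, such that all partial quotients of the continued fraction expansion of p/3^j are at most 3. -/

import Mathlib

open Matrix

/-- The generator matrix ((0,1),(1,a)). -/
def genM (a : ℕ) : Matrix (Fin 2) (Fin 2) ℤ := !![0, 1; 1, (a : ℤ)]

/-- Product of generators along a finite sequence. -/
def prodM (l : List ℕ) : Matrix (Fin 2) (Fin 2) ℤ := (l.map genM).prod

/-- Finite continued fraction [a₁,...,a_k] = 1/(a₁ + 1/(a₂ + ⋯ + 1/a_k)). -/
def cf : List ℕ → ℚ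
  | [] => 0
  | a :: t => 1 / ((a : ℚ) + cf t)

lemma prodM_cons (a : ℕ) (t : List ℕ) : prodM (a :: t) = genM a * prodM t := by
  simp [prodM]

lemma prodM_append (l m : List ℕ) : prodM (l ++ m) = prodM l * prodM m := by
  simp [prodM]

lemma prodM_reverse (l : List ℕ) : prodM l.reverse = (prodM l)ᵀ := by
  induction l with
  | nil => simp [prodM]
  | cons a t ih =>
    have h2 : (genM a)ᵀ = genM a := by
      ext i j; fin_cases i <;> fin_cases j <;> simp [genM]
    rw [List.reverse_cons, prodM_append, ih, prodM_cons a t, Matrix.transpose_mul, h2]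
    congr 1
    simp [prodM]

lemma fold1_q (m : List ℕ) :
    prodM (m ++ ([1,3] ++ m.reverse)) 1 1 = (prodM (m ++ [1,1]) 1 1)^2 := by
  rw [prodM_append, prodM_append, prodM_append, prodM_reverse]
  have h13 : prodM [1,3] = !![1,3;1,4] := by decide
  have h11 : prodM [1,1] = !![1,1;1,2] := by decide
  rw [h13, h11]
  simp [Matrix.mul_apply, Matrix.vecMul, dotProduct, Fin.sum_univ_two,
    Matrix.transpose_apply]
  ring

lemma fold3_q (m : List ℕ) :
    prodM (m ++ ([1,1,2,2] ++ m.reverse)) 1 1 = 3 * (prodM (m ++ [1,1]) 1 1)^2 := by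
  rw [prodM_append, prodM_append, prodM_append, prodM_reverse]
  have h13 : prodM [1,1,2,2] = !![3,7;5,12] := by decide
  have h11 : prodM [1,1] = !![1,1;1,2] := by decide
  rw [h13, h11]
  simp [Matrix.mul_apply, Matrix.vecMul, dotProduct, Fin.sum_univ_two,
    Matrix.transpose_apply]
  ring

lemma cf_prodM : ∀ l : List ℕ, (∀ a ∈ l, 1 ≤ a) →
    (0 ≤ prodM l 0 0 ∧ 0 ≤ prodM l 1 0) ∧
    (1 ≤ prodM l 1 1) ∧ (0 ≤ prodM l 0 1) ∧
    (l ≠ [] → 1 ≤ prodM l 0 1) ∧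
    (2 ≤ l.length → prodM l 0 1 < prodM l 1 1) ∧
    cf l = (prodM l 0 1 : ℚ) / (prodM l 1 1 : ℚ)
  | [], _ => by simp [prodM, cf]
  | a :: t, h => by
    obtain ⟨⟨h00, h10⟩, h11, h01, hne, _, hcf⟩ :=
      cf_prodM t (fun b hb => h b (List.mem_cons_of_mem a hb))
    have ha : 1 ≤ a := h a (List.mem_cons_self)
    have ha' : (1 : ℤ) ≤ (a : ℤ) := by exact_mod_cast ha
    have e00 : prodM (a :: t) 0 0 = prodM t 1 0 := by
      rw [prodM_cons]; simp [genM, Matrix.mul_apply, Fin.sum_univ_two]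
    have e01 : prodM (a :: t) 0 1 = prodM t 1 1 := by
      rw [prodM_cons]; simp [genM, Matrix.mul_apply, Fin.sum_univ_two]
    have e10 : prodM (a :: t) 1 0 = prodM t 0 0 + (a : ℤ) * prodM t 1 0 := by
      rw [prodM_cons]; simp [genM, Matrix.mul_apply, Fin.sum_univ_two]
    have e11 : prodM (a :: t) 1 1 = prodM t 0 1 + (a : ℤ) * prodM t 1 1 := by
      rw [prodM_cons]; simp [genM, Matrix.mul_apply, Fin.sum_univ_two]
    refine ⟨⟨by rw [e00]; exact h10, by rw [e10]; nlinarith⟩,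
      by rw [e11]; nlinarith, by rw [e01]; omega, fun _ => by rw [e01]; exact h11,
      fun hlen => ?_, ?_⟩
    · have htne : t ≠ [] := by
        intro hh; rw [hh] at hlen; simp at hlen
      have := hne htne
      rw [e01, e11]; nlinarith
    · have hq11 : (0 : ℚ) < (prodM t 1 1 : ℚ) := by exact_mod_cast h11
      have hq01 : (0 : ℚ) ≤ (prodM t 0 1 : ℚ) := by exact_mod_cast h01
      have haq : (1 : ℚ) ≤ (a : ℚ) := by exact_mod_cast ha
      show 1 / ((a : ℚ) + cf t) = _
      rw [hcf, e01, e11]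
      push_cast
      have h1 : (a : ℚ) + (prodM t 0 1 : ℚ) / (prodM t 1 1 : ℚ)
          = ((prodM t 0 1 : ℚ) + (a : ℚ) * (prodM t 1 1 : ℚ)) / (prodM t 1 1 : ℚ) := by
        field_simp
        ring
      rw [h1, one_div_div]

lemma det_prodM (l : List ℕ) : (prodM l).det = (-1) ^ l.length := by
  induction l with
  | nil => simp [prodM]
  | cons a t ih =>
    rw [prodM_cons, Matrix.det_mul, ih]
    have : (genM a).det = -1 := by simp [genM, Matrix.det_fin_two_of]
    rw [this, List.length_cons]; ring

lemma gcd_prodM (l : List ℕ) : Int.gcd (prodM l 0 1) (prodM l 1 1) = 1 := by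
  rw [← Int.isCoprime_iff_gcd_eq_one]
  have hd := det_prodM l
  rw [Matrix.det_fin_two] at hd
  set A := prodM l 0 0; set p := prodM l 0 1; set B := prodM l 1 0; set q := prodM l 1 1
  have h2 : (A * q - p * B) * (A * q - p * B) = 1 := by
    rw [hd, ← pow_add, ← two_mul, pow_mul]; norm_num
  exact ⟨-((A * q - p * B) * B), (A * q - p * B) * A,
    by linarith [h2, sq_nonneg (A * q - p * B)]⟩

/-- Niederreiter invariant: bounded entries, [1,1] at both ends, continuant 3^j. -/
def NGood (j : ℕ) (l : List ℕ) : Prop :=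
  (∀ a ∈ l, 1 ≤ a ∧ a ≤ 3) ∧ (∃ c, l = 1 :: 1 :: (c ++ [1, 1])) ∧
    prodM l 1 1 = 3 ^ j

lemma ngood_step {j : ℕ} {l : List ℕ} (h : NGood j l) :
    (∃ w, NGood (2 * j) w) ∧ (∃ w, NGood (2 * j + 1) w) := by
  obtain ⟨hb, ⟨c, rfl⟩, hq⟩ := h
  set m : List ℕ := 1 :: 1 :: c with hm
  have hml : (1 : ℕ) :: 1 :: (c ++ [1, 1]) = m ++ [1, 1] := by simp [hm]
  rw [hml] at hq hb
  have hmb : ∀ a ∈ m, 1 ≤ a ∧ a ≤ 3 := fun a ha => hb a (List.mem_append_left _ ha)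
  constructor
  · refine ⟨m ++ ([1, 3] ++ m.reverse), ?_, ?_, ?_⟩
    · intro a ha
      simp only [List.mem_append, List.mem_reverse, List.mem_cons, List.not_mem_nil,
        or_false] at ha
      rcases ha with ha | (rfl | rfl) | ha
      · exact hmb a ha
      · omega
      · omega
      · exact hmb a ha
    · refine ⟨c ++ [1, 3] ++ c.reverse, ?_⟩
      simp [hm]
    · rw [fold1_q, hq, ← pow_mul, mul_comm]
  · refine ⟨m ++ ([1, 1, 2, 2] ++ m.reverse), ?_, ?_, ?_⟩
    · intro a ha
      simp only [List.mem_append, List.mem_reverse, List.mem_cons, List.not_mem_nil,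
        or_false] at ha
      rcases ha with ha | (rfl | rfl | rfl | rfl) | ha
      · exact hmb a ha
      · omega
      · omega
      · omega
      · omega
      · exact hmb a ha
    · refine ⟨c ++ [1, 1, 2, 2] ++ c.reverse, ?_⟩
      simp [hm]
    · rw [fold3_q, hq, ← pow_mul, pow_succ, mul_comm 2 j, mul_comm]

lemma ngood_all : ∀ j, 4 ≤ j → ∃ l, NGood j l := by
  intro j
  induction j using Nat.strong_induction_on with
  | _ j ih =>
    intro hj
    by_cases h8 : j < 8
    · interval_cases j
      · exact ⟨[1,1,2,1,1,1,1,1,1], by decide, ⟨[2,1,1,1,1], rfl⟩, by decide⟩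
      · exact ⟨[1,1,2,1,3,1,1,1,1,1], by decide, ⟨[2,1,3,1,1,1], rfl⟩, by decide⟩
      · exact ⟨[1,1,3,1,3,1,2,1,1,1,1], by decide, ⟨[3,1,3,1,2,1,1], rfl⟩, by decide⟩
      · exact ⟨[1,1,2,1,2,2,2,3,1,1,1,1], by decide, ⟨[2,1,2,2,2,3,1,1], rfl⟩, by decide⟩
    · push_neg at h8
      obtain ⟨l, hl⟩ := ih (j / 2) (by omega) (by omega)
      obtain ⟨⟨w0, hw0⟩, ⟨w1, hw1⟩⟩ := ngood_step hl
      rcases Nat.even_or_odd j with he | ho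
      · obtain ⟨r, hr⟩ := he
        have h2 : 2 * (j / 2) = j := by omega
        exact ⟨w0, h2 ▸ hw0⟩
      · obtain ⟨r, hr⟩ := ho
        have h2 : 2 * (j / 2) + 1 = j := by omega
        exact ⟨w1, h2 ▸ hw1⟩

lemma main_of (j : ℕ) (l : List ℕ) (hb : ∀ a ∈ l, 1 ≤ a ∧ a ≤ 3)
    (hlen : 2 ≤ l.length) (hq : prodM l 1 1 = 3 ^ j) :
    ∃ p : ℕ, 1 ≤ p ∧ p < 3 ^ j ∧ Nat.gcd p (3 ^ j) = 1 ∧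
      ∃ l' : List ℕ, (∀ a ∈ l', 1 ≤ a ∧ a ≤ 3) ∧ cf l' = (p : ℚ) / (3 ^ j : ℚ) := by
  obtain ⟨_, h11, h01, hne, hlt, hcf⟩ := cf_prodM l (fun a ha => (hb a ha).1)
  have hnil : l ≠ [] := by intro hh; rw [hh] at hlen; simp at hlen
  have hp1 : 1 ≤ prodM l 0 1 := hne hnil
  have hplt : prodM l 0 1 < 3 ^ j := hq ▸ hlt hlen
  have h3 : ((3 : ℤ) ^ j) = ((3 ^ j : ℕ) : ℤ) := by push_cast; ring
  rw [h3] at hplt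
  refine ⟨(prodM l 0 1).toNat, by omega, by omega, ?_, l, hb, ?_⟩
  · have hg := gcd_prodM l
    rw [hq] at hg
    unfold Int.gcd at hg
    have h1 : (prodM l 0 1).natAbs = (prodM l 0 1).toNat := by omega
    have h2 : ((3 : ℤ) ^ j).natAbs = 3 ^ j := by
      rw [h3, Int.natAbs_natCast]
    rw [h1, h2] at hg
    exact hg
  · rw [hcf, hq]
    have : (((prodM l 0 1).toNat : ℕ) : ℚ) = ((prodM l 0 1 : ℤ) : ℚ) := by
      exact_mod_cast congrArg (fun z : ℤ => (z : ℚ)) (Int.toNat_of_nonneg h01)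
    rw [this]
    push_cast
    ring

theorem stmt_5 (j : ℕ) (hj : 1 ≤ j) :
    ∃ p : ℕ, 1 ≤ p ∧ p < 3 ^ j ∧ Nat.gcd p (3 ^ j) = 1 ∧
      ∃ l : List ℕ, (∀ a ∈ l, 1 ≤ a ∧ a ≤ 3) ∧ cf l = (p : ℚ) / (3 ^ j : ℚ) := by
  by_cases h4 : j < 4
  · interval_cases j
    · exact main_of 1 [2, 1] (by decide) (by decide) (by decide)
    · exact main_of 2 [2, 3, 1] (by decide) (by decide) (by decide)
    · exact main_of 3 [2, 1, 2, 3] (by decide) (by decide) (by decide)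
  · push_neg at h4
    obtain ⟨l, hb, ⟨c, rfl⟩, hq⟩ := ngood_all j h4
    exact main_of j _ hb (by simp) hq
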